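/- (PPT criterion / Peres–Horodecki, necessity) If a bipartite density matrix ρ on ℂ^{p_A·p_B} is separable, then its partial transpose ρ^{T_B} is positive semidefinite. -/

import Mathlib

open Matrix Finset
open scoped Kronecker ComplexOrder

def IsDensity {p : Type*} [Fintype p] (ρ : Matrix p p ℂ) : Prop :=
  ρ.PosSemidef ∧ ρ.trace = 1

def IsSepState {pA pB : ℕ} (ρ : Matrix (Fin pA × Fin pB) (Fin pA × Fin pB) ℂ) : Prop :=
  ∃ (n : ℕ) (q : Fin n → ℝ) (σA : Fin n → Matrix (Fin pA) (Fin pA) ℂ)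
    (σB : Fin n → Matrix (Fin pB) (Fin pB) ℂ),
    (∀ j, 0 ≤ q j) ∧ (∑ j, q j) = 1 ∧
    (∀ j, IsDensity (σA j)) ∧ (∀ j, IsDensity (σB j)) ∧
    ρ = ∑ j, (q j : ℂ) • (σA j ⊗ₖ σB j)


/-- Partial transpose with respect to the second (B) subsystem. -/
def ptB {pA pB : ℕ} (ρ : Matrix (Fin pA × Fin pB) (Fin pA × Fin pB) ℂ) :
    Matrix (Fin pA × Fin pB) (Fin pA × Fin pB) ℂ :=
  Matrix.of fun x y => ρ (x.1, y.2) (y.1, x.2)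

lemma kron_conjTranspose {m n : Type*} [Fintype m] [Fintype n]
    (A : Matrix m m ℂ) (B : Matrix n n ℂ) : (A ⊗ₖ B)ᴴ = Aᴴ ⊗ₖ Bᴴ := by
  ext x y
  simp [conjTranspose_apply, kroneckerMap_apply, mul_comm]

open scoped MatrixOrder in
lemma kron_posSemidef {m n : Type*} [Fintype m] [Fintype n] [DecidableEq m] [DecidableEq n]
    {A : Matrix m m ℂ} {B : Matrix n n ℂ}
    (hA : A.PosSemidef) (hB : B.PosSemidef) : (A ⊗ₖ B).PosSemidef := by
  obtain ⟨A₁, rfl⟩ : ∃ A₁ : Matrix m m ℂ, A = A₁ᴴ * A₁ :=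
    CStarAlgebra.nonneg_iff_eq_star_mul_self.mp hA.nonneg
  obtain ⟨B₁, rfl⟩ : ∃ B₁ : Matrix n n ℂ, B = B₁ᴴ * B₁ :=
    CStarAlgebra.nonneg_iff_eq_star_mul_self.mp hB.nonneg
  rw [Matrix.mul_kronecker_mul, ← kron_conjTranspose]
  exact Matrix.posSemidef_conjTranspose_mul_self _

lemma psd_real_smul {m : Type*} [Fintype m] {A : Matrix m m ℂ} (hA : A.PosSemidef)
    {q : ℝ} (hq : 0 ≤ q) : ((q : ℂ) • A).PosSemidef := by
  constructor
  · unfold Matrix.IsHermitian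
    rw [conjTranspose_smul, hA.1.eq]
    congr 1
    simp
  · exact (hA.smul (a := (q : ℂ)) (by exact_mod_cast hq)).2

theorem ppt_criterion_necessity {pA pB : ℕ}
    (ρ : Matrix (Fin pA × Fin pB) (Fin pA × Fin pB) ℂ)
    (hρ : IsDensity ρ) (hsep : IsSepState ρ) : (ptB ρ).PosSemidef := by
  obtain ⟨n, q, σA, σB, hq, _, hσA, hσB, rfl⟩ := hsep
  have : ptB (∑ j, (q j : ℂ) • (σA j ⊗ₖ σB j))
      = ∑ j, (q j : ℂ) • (σA j ⊗ₖ (σB j)ᵀ) := by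
    ext x y
    simp [ptB, Matrix.sum_apply, kroneckerMap_apply]
  rw [this]
  exact Finset.sum_induction _ _ (fun a b ha hb => ha.add hb) Matrix.PosSemidef.zero
    fun j _ => psd_real_smul (kron_posSemidef (hσA j).1 (hσB j).1.transpose) (hq j)
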